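/- For all q > 0, all integers k ≥ 2, and all j with 1 ≤ j ≤ k-1, one has [n-k]_q[n+k-1]_q ≤ [n-k+j]_q[n+k-j-1]_q for every n ≥ k. -/
import Mathlib


open Finset Filter Topology

/-- The q-integer `[m]_q = 1 + q + ... + q^{m-1}`, with `[0]_q = 0`. -/
noncomputable def qInt (q : ℝ) (m : ℕ) : ℝ := ∑ i ∈ Finset.range m, q ^ i

/-- The q-factorial `[n]_q! = [1]_q [2]_q ⋯ [n]_q`. -/
noncomputable def qFact (q : ℝ) (n : ℕ) : ℝ := ∏ i ∈ Finset.range n, qInt q (i + 1)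

/-- The q-binomial coefficient `[n]_q!/([k]_q! [n-k]_q!)` (zero if `k > n`). -/
noncomputable def qBinom (q : ℝ) (n k : ℕ) : ℝ :=
  if k ≤ n then qFact q n / (qFact q k * qFact q (n - k)) else 0

/-- The q-Stirling number of the second kind. -/
noncomputable def qStirling (q : ℝ) (k r : ℕ) : ℝ :=
  (1 / (qFact q r * q ^ (r * (r - 1) / 2))) *
    ∑ i ∈ Finset.range (r + 1),
      (-1 : ℝ) ^ i * q ^ (i * (i - 1) / 2) * qBinom q r i * (qInt q (r - i)) ^ k

/-- The q-forward difference operator on sequences: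
`Δ_q^0 f_i = f_i`, `Δ_q^{r+1} f_i = Δ_q^r f_{i+1} - q^r Δ_q^r f_i`. -/
noncomputable def qDiff (q : ℝ) : ℕ → (ℕ → ℝ) → ℕ → ℝ
  | 0, f, i => f i
  | r + 1, f, i => qDiff q r f (i + 1) - q ^ r * qDiff q r f i

/-- The eigenvalues `λ_{k,q}^{(α,n)}` of the (α,q)-Bernstein operator. -/
noncomputable def lamEig (q α : ℝ) (n k : ℕ) : ℝ :=
  q ^ (k * (k - 1) / 2) * qFact q (n - 2) / (qFact q (n - k) * (qInt q n) ^ k) *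
    ((1 - α) * qInt q (n - k) * qInt q (n - 1 + k) + α * qInt q n * qInt q (n - 1))

/-- The coefficients `a_{n,q}(r,k)` of `T_{n,q,α}(t^k; x) = Σ_r a_{n,q}(r,k) x^r`. -/
noncomputable def aCoef (q α : ℝ) (n r k : ℕ) : ℝ :=
  q ^ (r * (r - 1) / 2) * qFact q (n - 2) / ((qInt q n) ^ k * qFact q (n - r)) *
    ((1 - α) * qInt q (n - r) *
        (qInt q (n + r - 1) * qStirling q (k + 1) (r + 1) -
          qInt q (r + 1) * qInt q (n - 1) * qStirling q k (r + 1)) +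
      α * qInt q n * qInt q (n - 1) * qStirling q k r)

/-- The (α,q)-Bernstein operator, via its forward-difference representation
`T_{n,q,α}(f;x) = Σ_{r=0}^n ((1-α) C_q(n-1,r) Δ_q^r g_0 + α C_q(n,r) Δ_q^r f_0) x^r`,
where `f_i = f([i]_q/[n]_q)` and
`g_i = (1 - q^{n-i-1}[i]_q/[n-1]_q) f_i + (q^{n-i-1}[i]_q/[n-1]_q) f_{i+1}`. -/
noncomputable def Talpha (q α : ℝ) (n : ℕ) (f : ℝ → ℝ) (x : ℝ) : ℝ :=
  let fs : ℕ → ℝ := fun i => f (qInt q i / qInt q n)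
  let gs : ℕ → ℝ := fun i =>
    (1 - q ^ (n - i - 1) * qInt q i / qInt q (n - 1)) * fs i +
      (q ^ (n - i - 1) * qInt q i / qInt q (n - 1)) * fs (i + 1)
  ∑ r ∈ Finset.range (n + 1),
    ((1 - α) * qBinom q (n - 1) r * qDiff q r gs 0 + α * qBinom q n r * qDiff q r fs 0) * x ^ r

lemma qInt_add' (q : ℝ) (m p : ℕ) : qInt q (m + p) = qInt q m + q ^ m * qInt q p := by
  simp only [qInt, Finset.sum_range_add, Finset.mul_sum, pow_add]

lemma qInt_nonneg' (q : ℝ) (hq : 0 ≤ q) (a : ℕ) : 0 ≤ qInt q a :=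
  Finset.sum_nonneg fun i _ => pow_nonneg hq i

lemma qInt_mono' (q : ℝ) (hq : 0 ≤ q) {a b : ℕ} (hab : a ≤ b) : qInt q a ≤ qInt q b :=
  Finset.sum_le_sum_of_subset_of_nonneg (Finset.range_subset_range.2 hab)
    (fun i _ _ => pow_nonneg hq i)

lemma qInt_key (q : ℝ) (hq : 0 ≤ q) (a d j : ℕ) (hjd : j ≤ d) :
    qInt q a * qInt q (a + d + j) ≤ qInt q (a + j) * qInt q (a + d) := by
  have h1 := qInt_add' q (a + d) j
  have h2 := qInt_add' q a j
  have h3 := qInt_add' q (a + d) a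
  have h4 := qInt_add' q a (a + d)
  have hcomm : (a + d) + a = a + (a + d) := by omega
  rw [hcomm] at h3
  have hmono : qInt q a ≤ qInt q (a + d) := qInt_mono' q hq (by omega)
  have hjnn : 0 ≤ qInt q j := qInt_nonneg' q hq j
  have hann : 0 ≤ qInt q a := qInt_nonneg' q hq a
  have hstep : q ^ (a + d) * qInt q a ≤ q ^ a * qInt q (a + d) := by linarith
  have : q ^ (a + d) * qInt q a * qInt q j ≤ q ^ a * qInt q (a + d) * qInt q j :=
    mul_le_mul_of_nonneg_right hstep hjnn
  rw [h1, h2]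
  nlinarith [this]

theorem qInt_prod_le (q : ℝ) (hq : 0 < q) (k j : ℕ) (hk : 2 ≤ k) (hj1 : 1 ≤ j)
    (hj : j ≤ k - 1) :
    ∀ n : ℕ, k ≤ n →
      qInt q (n - k) * qInt q (n + k - 1) ≤ qInt q (n - k + j) * qInt q (n + k - j - 1) := by
  intro n hn
  obtain ⟨a, rfl⟩ : ∃ a, n = k + a := ⟨n - k, by omega⟩
  have e1 : k + a - k = a := by omega
  have e2 : k + a + k - 1 = a + (2 * k - 1 - j) + j := by omega
  have e3 : k + a - k + j = a + j := by omega
  have e4 : k + a + k - j - 1 = a + (2 * k - 1 - j) := by omega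
  rw [e3, e4, e1, e2]
  exact qInt_key q hq.le a (2 * k - 1 - j) j (by omega)
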